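/- Let x ∈ l(r,s,t,p;Δ) and (x^m) ⊆ l(r,s,t,p;Δ) with 1 < p_n ≤ M. If σ_p(x^m) → σ_p(x) and x^m_k → x_k as m → ∞ for each k, then ‖x^m − x‖ → 0 in the Luxemburg norm. -/

import Mathlib

open Finset Filter Topology ENNReal

/-- The difference operator `Δ` with the convention `x₋₁ = 0`. -/
def del (x : ℕ → ℝ) (k : ℕ) : ℝ :=
  x k - if k = 0 then 0 else x (k - 1)

/-- The generalized-means-of-differences transform `(A(r,s,t)·Δ)x`. -/
noncomputable def Amap (r s t : ℕ → ℝ) (x : ℕ → ℝ) (n : ℕ) : ℝ :=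
  (1 / r n) * ∑ k ∈ Finset.range (n + 1), s (n - k) * t k * del x k

/-- The modular `σ_p` on `l(r,s,t,p;Δ)`, with values in `[0,∞]`. -/
noncomputable def sigmaP (r s t p : ℕ → ℝ) (x : ℕ → ℝ) : ℝ≥0∞ :=
  ∑' n, ENNReal.ofReal (|Amap r s t x n| ^ p n)

/-- The space `l(r,s,t,p;Δ)`. -/
def lrstp (r s t p : ℕ → ℝ) : Set (ℕ → ℝ) :=
  {x | sigmaP r s t p x < ⊤}

/-- The paranorm `h̃` on `l(r,s,t,p;Δ)`. -/
noncomputable def htilde (r s t p : ℕ → ℝ) (M : ℝ) (x : ℕ → ℝ) : ℝ :=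
  ((sigmaP r s t p x).toReal) ^ (1 / M)

/-- The Luxemburg norm on `l(r,s,t,p;Δ)`. -/
noncomputable def lux (r s t p : ℕ → ℝ) (x : ℕ → ℝ) : ℝ :=
  sInf {c : ℝ | 0 < c ∧ sigmaP r s t p (c⁻¹ • x) ≤ 1}

section Aux
open MeasureTheory

lemma del_sub (y z : ℕ → ℝ) (k : ℕ) : del (y - z) k = del y k - del z k := by
  simp only [del, Pi.sub_apply]; split_ifs <;> ring

lemma del_smul (c : ℝ) (y : ℕ → ℝ) (k : ℕ) : del (c • y) k = c * del y k := by
  simp only [del, Pi.smul_apply, smul_eq_mul]; split_ifs <;> ring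

lemma Amap_sub (r s t : ℕ → ℝ) (y z : ℕ → ℝ) (n : ℕ) :
    Amap r s t (y - z) n = Amap r s t y n - Amap r s t z n := by
  simp only [Amap, del_sub]
  rw [← mul_sub, ← Finset.sum_sub_distrib]
  congr 1
  exact Finset.sum_congr rfl fun k _ => by ring

lemma Amap_smul (r s t : ℕ → ℝ) (c : ℝ) (y : ℕ → ℝ) (n : ℕ) :
    Amap r s t (c • y) n = c * Amap r s t y n := by
  simp only [Amap, del_smul]
  rw [Finset.mul_sum, Finset.mul_sum, Finset.mul_sum]
  exact Finset.sum_congr rfl fun k _ => by ring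

lemma tendsto_Amap (r s t : ℕ → ℝ) (x : ℕ → ℝ) (xs : ℕ → ℕ → ℝ)
    (hcoord : ∀ k, Tendsto (fun m => xs m k) atTop (𝓝 (x k))) (n : ℕ) :
    Tendsto (fun m => Amap r s t (xs m) n) atTop (𝓝 (Amap r s t x n)) := by
  unfold Amap
  apply Filter.Tendsto.const_mul
  apply tendsto_finset_sum
  intro k _
  apply Filter.Tendsto.const_mul
  unfold del
  rcases Nat.eq_zero_or_pos k with hk | hk
  · subst hk; simpa using hcoord 0
  · simp only [if_neg hk.ne']; exact (hcoord k).sub (hcoord (k - 1))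

lemma two_point_ineq {u v q : ℝ} (hu : 0 ≤ u) (hv : 0 ≤ v) (hq : 1 ≤ q) :
    (u + v) ^ q ≤ 2 ^ (q - 1) * (u ^ q + v ^ q) := by
  have h := NNReal.rpow_add_le_mul_rpow_add_rpow ⟨u, hu⟩ ⟨v, hv⟩ hq
  have h2 := NNReal.coe_le_coe.2 h
  push_cast at h2
  convert h2 using 3 <;> rfl

lemma abs_sub_rpow_le {u v q MM : ℝ} (hq : 1 ≤ q) (hqM : q ≤ MM) :
    |u - v| ^ q ≤ 2 ^ (MM - 1) * (|u| ^ q + |v| ^ q) := by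
  have h0 : (0:ℝ) ≤ q := le_trans zero_le_one hq
  have h1 : |u - v| ^ q ≤ (|u| + |v|) ^ q :=
    Real.rpow_le_rpow (abs_nonneg _) (abs_sub u v) h0
  have h2 : (|u| + |v|) ^ q ≤ 2 ^ (q - 1) * (|u| ^ q + |v| ^ q) :=
    two_point_ineq (abs_nonneg _) (abs_nonneg _) hq
  have h3 : (2:ℝ) ^ (q - 1) ≤ 2 ^ (MM - 1) :=
    Real.rpow_le_rpow_of_exponent_le one_le_two (by linarith)
  have h4 : (0:ℝ) ≤ |u| ^ q + |v| ^ q := by positivity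
  calc |u - v| ^ q ≤ 2 ^ (q - 1) * (|u| ^ q + |v| ^ q) := le_trans h1 h2
    _ ≤ 2 ^ (MM - 1) * (|u| ^ q + |v| ^ q) := mul_le_mul_of_nonneg_right h3 h4

/-- Scaling bound for the modular. -/
lemma sigmaP_smul_le (r s t p : ℕ → ℝ) (M : ℝ) (hp : ∀ n, 1 ≤ p n) (hpM : ∀ n, p n ≤ M)
    (lam : ℝ) (hlam : 0 < lam) (y : ℕ → ℝ) :
    sigmaP r s t p (lam • y) ≤ ENNReal.ofReal (max lam (lam ^ M)) * sigmaP r s t p y := by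
  unfold sigmaP
  rw [← ENNReal.tsum_mul_left]
  apply ENNReal.tsum_le_tsum
  intro n
  apply le_trans (ENNReal.ofReal_le_ofReal ?_)
    (le_of_eq (ENNReal.ofReal_mul (le_max_of_le_left hlam.le)))
  rw [Amap_smul, abs_mul, Real.mul_rpow (abs_nonneg _) (abs_nonneg _),
    abs_of_pos hlam]
  apply mul_le_mul_of_nonneg_right _ (Real.rpow_nonneg (abs_nonneg _) _)
  rcases le_total lam 1 with h | h
  · refine le_max_of_le_left ?_
    calc lam ^ p n ≤ lam ^ (1:ℝ) := Real.rpow_le_rpow_of_exponent_ge hlam h (hp n)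
      _ = lam := Real.rpow_one lam
  · exact le_max_of_le_right (Real.rpow_le_rpow_of_exponent_le h (hpM n))

lemma stepA (r s t p : ℕ → ℝ) (M : ℝ) (hp : ∀ n, 1 < p n) (hpM : ∀ n, p n ≤ M)
    (x : ℕ → ℝ) (hx : sigmaP r s t p x < ⊤)
    (xs : ℕ → ℕ → ℝ) (hxs : ∀ m, sigmaP r s t p (xs m) < ⊤)
    (hmod : Tendsto (fun m => (sigmaP r s t p (xs m)).toReal) atTop
      (𝓝 ((sigmaP r s t p x).toReal)))
    (hcoord : ∀ k, Tendsto (fun m => xs m k) atTop (𝓝 (x k))) :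
    Tendsto (fun m => sigmaP r s t p (xs m - x)) atTop (𝓝 0) := by
  set a : ℕ → ℝ := fun n => Amap r s t x n with ha
  set b : ℕ → ℕ → ℝ := fun m n => Amap r s t (xs m) n with hbdef
  have hb_tend : ∀ n, Tendsto (fun m => b m n) atTop (𝓝 (a n)) :=
    fun n => tendsto_Amap r s t x xs hcoord n
  have hM : 1 < M := lt_of_lt_of_le (hp 0) (hpM 0)
  set c : ℝ := 2 ^ (M - 1) with hc
  have hc0 : 0 < c := Real.rpow_pos_of_pos two_pos _
  set Sx : ℝ≥0∞ := sigmaP r s t p x with hSxdef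
  set S : ℕ → ℝ≥0∞ := fun m => sigmaP r s t p (xs m) with hSdef
  set D : ℕ → ℝ≥0∞ := fun m => sigmaP r s t p (xs m - x) with hDdef
  have hSx_ne : Sx ≠ ⊤ := hx.ne
  have hS_ne : ∀ m, S m ≠ ⊤ := fun m => (hxs m).ne
  set u : ℕ → ℕ → ℝ := fun m n => |b m n| ^ p n with hudef
  set v : ℕ → ℝ := fun n => |a n| ^ p n with hvdef
  set w : ℕ → ℕ → ℝ := fun m n => |b m n - a n| ^ p n with hwdef
  have hu0 : ∀ m n, 0 ≤ u m n := fun m n => Real.rpow_nonneg (abs_nonneg _) _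
  have hv0 : ∀ n, 0 ≤ v n := fun n => Real.rpow_nonneg (abs_nonneg _) _
  have hw0 : ∀ m n, 0 ≤ w m n := fun m n => Real.rpow_nonneg (abs_nonneg _) _
  have hkey : ∀ m n, w m n ≤ c * (u m n + v n) := fun m n =>
    abs_sub_rpow_le (hp n).le (hpM n)
  have hSx_eq : Sx = ∑' n, ENNReal.ofReal (v n) := rfl
  have hS_eq : ∀ m, S m = ∑' n, ENNReal.ofReal (u m n) := fun m => rfl
  have hD_eq : ∀ m, D m = ∑' n, ENNReal.ofReal (w m n) := by
    intro m
    simp only [hDdef, sigmaP]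
    congr 1; funext n
    rw [hwdef]
    congr 3
    rw [Amap_sub]
  have hC_eq : ∀ m, (∑' n, ENNReal.ofReal (c * (u m n + v n)))
      = ENNReal.ofReal c * (S m + Sx) := by
    intro m
    rw [hS_eq m, hSx_eq, ← ENNReal.tsum_add, ← ENNReal.tsum_mul_left]
    congr 1; funext n
    rw [ENNReal.ofReal_mul hc0.le, ENNReal.ofReal_add (hu0 m n) (hv0 n)]
  set L : ℕ → ℝ≥0∞ := fun m => ENNReal.ofReal c * (S m + Sx) with hLdef
  have hL_ne : ∀ m, L m ≠ ⊤ := fun m => by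
    simp only [hLdef]
    exact ENNReal.mul_ne_top ENNReal.ofReal_ne_top (ENNReal.add_ne_top.2 ⟨hS_ne m, hSx_ne⟩)
  have hDleL : ∀ m, D m ≤ L m := by
    intro m
    rw [hD_eq m]
    calc (∑' n, ENNReal.ofReal (w m n))
        ≤ ∑' n, ENNReal.ofReal (c * (u m n + v n)) :=
          ENNReal.tsum_le_tsum fun n => ENNReal.ofReal_le_ofReal (hkey m n)
      _ = ENNReal.ofReal c * (S m + Sx) := hC_eq m
      _ = L m := rfl
  have hD_ne : ∀ m, D m ≠ ⊤ := fun m => ne_top_of_le_ne_top (hL_ne m) (hDleL m)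
  have hS_tend : Tendsto S atTop (𝓝 Sx) := by
    have h1 : Tendsto (fun m => ENNReal.ofReal ((S m).toReal)) atTop
        (𝓝 (ENNReal.ofReal (Sx.toReal))) := (ENNReal.continuous_ofReal.tendsto _).comp hmod
    have h2 : (fun m => ENNReal.ofReal ((S m).toReal)) = S :=
      funext fun m => ENNReal.ofReal_toReal (hS_ne m)
    rwa [h2, ENNReal.ofReal_toReal hSx_ne] at h1
  set T : ℝ≥0∞ := ENNReal.ofReal c * (Sx + Sx) with hTdef
  have hT_ne : T ≠ ⊤ :=
    ENNReal.mul_ne_top ENNReal.ofReal_ne_top (ENNReal.add_ne_top.2 ⟨hSx_ne, hSx_ne⟩)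
  have hL_tend : Tendsto L atTop (𝓝 T) :=
    ENNReal.Tendsto.const_mul (hS_tend.add tendsto_const_nhds) (Or.inr ENNReal.ofReal_ne_top)
  set f : ℕ → ℕ → ℝ≥0∞ := fun m n => ENNReal.ofReal (c * (u m n + v n) - w m n) with hfdef
  have hpn0 : ∀ n, (0:ℝ) ≤ p n := fun n => le_trans zero_le_one (hp n).le
  have hf_tend : ∀ n, Tendsto (fun m => f m n) atTop
      (𝓝 (ENNReal.ofReal (c * (v n + v n)))) := by
    intro n
    have h1 : Tendsto (fun m => u m n) atTop (𝓝 (v n)) :=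
      ((hb_tend n).abs).rpow_const (Or.inr (hpn0 n))
    have h3 : Tendsto (fun m => |b m n - a n|) atTop (𝓝 0) := by
      have h := ((hb_tend n).sub (tendsto_const_nhds (x := a n))).abs
      simpa using h
    have h2 : Tendsto (fun m => w m n) atTop (𝓝 0) := by
      have h4 := h3.rpow_const (p := p n) (Or.inr (hpn0 n))
      rwa [Real.zero_rpow (lt_trans zero_lt_one (hp n)).ne'] at h4
    have h5 : Tendsto (fun m => c * (u m n + v n) - w m n) atTop
        (𝓝 (c * (v n + v n) - 0)) := ((h1.add_const (v n)).const_mul c).sub h2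
    rw [sub_zero] at h5
    exact (ENNReal.continuous_ofReal.tendsto _).comp h5
  have hliminf : ∀ n, atTop.liminf (fun m => f m n) = ENNReal.ofReal (c * (v n + v n)) :=
    fun n => (hf_tend n).liminf_eq
  have hfatou : (∑' n, ENNReal.ofReal (c * (v n + v n)))
      ≤ atTop.liminf (fun m => ∑' n, f m n) := by
    calc (∑' n, ENNReal.ofReal (c * (v n + v n)))
        = ∑' n, atTop.liminf (fun m => f m n) := by simp only [hliminf]
      _ = ∫⁻ n, atTop.liminf (fun m => f m n) ∂(Measure.count) := (lintegral_count _).symm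
      _ ≤ atTop.liminf (fun m => ∫⁻ n, f m n ∂(Measure.count)) :=
          lintegral_liminf_le fun m => measurable_of_countable _
      _ = atTop.liminf (fun m => ∑' n, f m n) := by simp only [lintegral_count]
  have hfsum : ∀ m, (∑' n, f m n) = L m - D m := by
    intro m
    have h1 : ∀ n, f m n
        = ENNReal.ofReal (c * (u m n + v n)) - ENNReal.ofReal (w m n) :=
      fun n => ENNReal.ofReal_sub _ (hw0 m n)
    simp only [h1]
    rw [ENNReal.tsum_sub (by rw [← hD_eq m]; exact hD_ne m)
      (fun n => ENNReal.ofReal_le_ofReal (hkey m n)), hC_eq m, ← hD_eq m]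
  have hTsum : (∑' n, ENNReal.ofReal (c * (v n + v n))) = T := by
    rw [hTdef, hSx_eq, ← ENNReal.tsum_add, ← ENNReal.tsum_mul_left]
    congr 1; funext n
    rw [ENNReal.ofReal_mul hc0.le, ENNReal.ofReal_add (hv0 n) (hv0 n)]
  have hT_le : T ≤ atTop.liminf (fun m => L m - D m) := by
    rw [← hTsum]
    rw [show (fun m => ∑' n, f m n) = fun m => L m - D m from funext hfsum] at hfatou
    exact hfatou
  -- real-valued convergence of D
  have hDreal : Tendsto (fun m => (D m).toReal) atTop (𝓝 0) := by
    have hLreal : Tendsto (fun m => (L m).toReal) atTop (𝓝 T.toReal) :=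
      (ENNReal.tendsto_toReal hT_ne).comp hL_tend
    by_cases hT0 : T = 0
    · have hL0 : Tendsto (fun m => (L m).toReal) atTop (𝓝 0) := by
        rw [hT0] at hLreal; simpa using hLreal
      exact tendsto_of_tendsto_of_tendsto_of_le_of_le tendsto_const_nhds hL0
        (fun m => ENNReal.toReal_nonneg)
        (fun m => ENNReal.toReal_mono (hL_ne m) (hDleL m))
    · rw [NormedAddCommGroup.tendsto_nhds_zero]
      intro ε hε
      set δ : ℝ≥0∞ := min (ENNReal.ofReal (ε/4)) (T/2) with hδdef
      have hδ0 : δ ≠ 0 := by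
        have h1 : ENNReal.ofReal (ε/4) ≠ 0 := (ENNReal.ofReal_pos.2 (by linarith)).ne'
        have h2 : T/2 ≠ 0 := by simp [ENNReal.div_eq_zero_iff, hT0]
        rcases min_cases (ENNReal.ofReal (ε/4)) (T/2) with h | h <;>
          rw [hδdef, h.1] <;> assumption
      have hδT : δ ≤ T := le_trans (min_le_right _ _) (ENNReal.half_le_self)
      have hδ_ne : δ ≠ ⊤ := ne_top_of_le_ne_top ENNReal.ofReal_ne_top (min_le_left _ _)
      have hδr : δ.toReal ≤ ε/4 := by
        calc δ.toReal ≤ (ENNReal.ofReal (ε/4)).toReal :=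
              ENNReal.toReal_mono ENNReal.ofReal_ne_top (min_le_left _ _)
          _ = ε/4 := ENNReal.toReal_ofReal (by linarith)
      have ev1 : ∀ᶠ m in atTop, T - δ < L m - D m :=
        eventually_lt_of_lt_liminf
          (lt_of_lt_of_le (ENNReal.sub_lt_self hT_ne hT0 hδ0) hT_le)
      have ev2 : ∀ᶠ m in atTop, L m < T + δ :=
        hL_tend.eventually_lt_const (ENNReal.lt_add_right hT_ne hδ0)
      filter_upwards [ev1, ev2] with m h1 h2
      have hLD_ne : L m - D m ≠ ⊤ := ne_top_of_le_ne_top (hL_ne m) tsub_le_self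
      have r1 : T.toReal - δ.toReal < (L m).toReal - (D m).toReal := by
        have h := (ENNReal.toReal_lt_toReal (ne_top_of_le_ne_top hT_ne tsub_le_self) hLD_ne).2 h1
        rwa [ENNReal.toReal_sub_of_le hδT hT_ne,
          ENNReal.toReal_sub_of_le (hDleL m) (hL_ne m)] at h
      have r2 : (L m).toReal < T.toReal + δ.toReal := by
        have h := (ENNReal.toReal_lt_toReal (hL_ne m)
          (ENNReal.add_ne_top.2 ⟨hT_ne, hδ_ne⟩)).2 h2
        rwa [ENNReal.toReal_add hT_ne hδ_ne] at h
      rw [Real.norm_eq_abs, abs_of_nonneg ENNReal.toReal_nonneg]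
      linarith
  have h1 : Tendsto (fun m => ENNReal.ofReal ((D m).toReal)) atTop
      (𝓝 (ENNReal.ofReal 0)) := (ENNReal.continuous_ofReal.tendsto _).comp hDreal
  have h2 : (fun m => ENNReal.ofReal ((D m).toReal)) = D :=
    funext fun m => ENNReal.ofReal_toReal (hD_ne m)
  rwa [h2, ENNReal.ofReal_zero] at h1

end Aux

theorem modular_coord_convergence_implies_norm
    (r s t p : ℕ → ℝ) (hr : ∀ n, r n ≠ 0) (ht : ∀ n, t n ≠ 0) (hs0 : s 0 ≠ 0)
    (M : ℝ) (hp : ∀ n, 1 < p n) (hpM : ∀ n, p n ≤ M)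
    (x : ℕ → ℝ) (hx : x ∈ lrstp r s t p)
    (xs : ℕ → ℕ → ℝ) (hxs : ∀ m, xs m ∈ lrstp r s t p)
    (hmod : Tendsto (fun m => (sigmaP r s t p (xs m)).toReal) atTop
      (𝓝 ((sigmaP r s t p x).toReal)))
    (hcoord : ∀ k, Tendsto (fun m => xs m k) atTop (𝓝 (x k))) :
    Tendsto (fun m => lux r s t p (xs m - x)) atTop (𝓝 0) := by
  have hD0 : Tendsto (fun m => sigmaP r s t p (xs m - x)) atTop (𝓝 0) :=
    stepA r s t p M hp hpM x hx xs hxs hmod hcoord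
  rw [NormedAddCommGroup.tendsto_nhds_zero]
  intro ε hε
  set lam : ℝ := (ε/2)⁻¹ with hlamdef
  have hlam0 : 0 < lam := by positivity
  set K : ℝ := max lam (lam ^ M) with hKdef
  have hscale : ∀ m, sigmaP r s t p (lam • (xs m - x))
      ≤ ENNReal.ofReal K * sigmaP r s t p (xs m - x) :=
    fun m => sigmaP_smul_le r s t p M (fun n => (hp n).le) hpM lam hlam0 _
  have hK : Tendsto (fun m => ENNReal.ofReal K * sigmaP r s t p (xs m - x)) atTop (𝓝 0) := by
    have h := ENNReal.Tendsto.const_mul (a := ENNReal.ofReal K) hD0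
      (Or.inr ENNReal.ofReal_ne_top)
    simpa using h
  have hev : ∀ᶠ m in atTop, sigmaP r s t p ((ε/2)⁻¹ • (xs m - x)) ≤ 1 := by
    have h1 : ∀ᶠ m in atTop, ENNReal.ofReal K * sigmaP r s t p (xs m - x) < 1 :=
      hK.eventually_lt_const zero_lt_one
    filter_upwards [h1] with m hm
    exact le_trans (hscale m) hm.le
  filter_upwards [hev] with m hm
  have hmem : (ε/2) ∈ {c : ℝ | 0 < c ∧ sigmaP r s t p (c⁻¹ • (xs m - x)) ≤ 1} :=
    ⟨by positivity, hm⟩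
  have hbdd : BddBelow {c : ℝ | 0 < c ∧ sigmaP r s t p (c⁻¹ • (xs m - x)) ≤ 1} :=
    ⟨0, fun y hy => hy.1.le⟩
  have hle : lux r s t p (xs m - x) ≤ ε/2 := csInf_le hbdd hmem
  have hnn : 0 ≤ lux r s t p (xs m - x) := Real.sInf_nonneg (fun y hy => hy.1.le)
  rw [Real.norm_eq_abs, abs_of_nonneg hnn]
  linarith
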